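/- Let P be a connected finite Γ-colored minuscule poset. Then either P is a chain and Γ is simply laced, or P is slant irreducible as a Γ-colored d-complete poset. -/

import Mathlib

/-!
Common definitions: Dynkin diagram data, Γ-colored posets, and the coloring
properties EC, NA, AC, ICE2, UCB1, LCB1 from the paper, together with
Γ-colored d-complete and Γ-colored minuscule posets, top trees, slant
irreducibility, extensions, lower frontier censuses, and full heaps.
-/

universe u v w

variable {Γ : Type u} {P : Type v}

/-- The integers `θ a b` form a Dynkin diagram datum. -/
def DynkinDatum (θ : Γ → Γ → ℤ) : Prop :=
  (∀ a : Γ, θ a a = 2) ∧ (∀ a b : Γ, a ≠ b → θ a b ≤ 0) ∧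
    (∀ a b : Γ, a ≠ b → (θ a b = 0 ↔ θ b a = 0))

/-- Colors `a` and `b` are adjacent. -/
def AdjColor (θ : Γ → Γ → ℤ) (a b : Γ) : Prop := θ a b < 0

/-- The Dynkin diagram is simply laced. -/
def SimplyLaced (θ : Γ → Γ → ℤ) : Prop :=
  ∀ a b : Γ, a ≠ b → θ a b = 0 ∨ θ a b = -1

/-- All closed intervals are finite. -/
def LocallyFinitePoset (α : Type*) [PartialOrder α] : Prop :=
  ∀ x y : α, (Set.Icc x y).Finite

/-- A poset is connected if it cannot be written as a disjoint union of two nonempty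
subposets with no comparabilities between them. -/
def ConnectedPoset (α : Type*) [PartialOrder α] : Prop :=
  ∀ S : Set α, S.Nonempty → Sᶜ.Nonempty → ∃ x ∈ S, ∃ y ∈ Sᶜ, x ≤ y ∨ y ≤ x

section
variable [PartialOrder P]

/-- (EC) Elements with equal colors are comparable. -/
def ColoredEC (κ : P → Γ) : Prop := ∀ x y : P, κ x = κ y → x ≤ y ∨ y ≤ x

/-- (NA) Neighbors have adjacent colors. -/
def ColoredNA (θ : Γ → Γ → ℤ) (κ : P → Γ) : Prop :=
  ∀ x y : P, x ⋖ y → AdjColor θ (κ x) (κ y)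

/-- (AC) Elements with adjacent colors are comparable. -/
def ColoredAC (θ : Γ → Γ → ℤ) (κ : P → Γ) : Prop :=
  ∀ x y : P, AdjColor θ (κ x) (κ y) → x ≤ y ∨ y ≤ x

/-- (ICE2) Between consecutive elements of a color `a`, the census of colors
adjacent to `a` is two. -/
def ColoredICE2 (θ : Γ → Γ → ℤ) (κ : P → Γ) : Prop :=
  ∀ (a : Γ) (x y : P), κ x = a → κ y = a → x < y → (∀ z ∈ Set.Ioo x y, κ z ≠ a) →
    (∑ᶠ z ∈ Set.Ioo x y, -θ (κ z) a) = 2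

/-- `U(x,P)`: elements above `x` with color adjacent to that of `x`. -/
def USet (θ : Γ → Γ → ℤ) (κ : P → Γ) (x : P) : Set P :=
  {y : P | x < y ∧ AdjColor θ (κ y) (κ x)}

/-- `L(x,P)`: elements below `x` with color adjacent to that of `x`. -/
def LSet (θ : Γ → Γ → ℤ) (κ : P → Γ) (x : P) : Set P :=
  {y : P | y < x ∧ AdjColor θ (κ y) (κ x)}

/-- (UCB1) Upper frontier census bound. -/
def ColoredUCB1 (θ : Γ → Γ → ℤ) (κ : P → Γ) : Prop :=
  ∀ x : P, (∀ y : P, κ y = κ x → ¬x < y) →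
    (USet θ κ x).Finite ∧ (∑ᶠ y ∈ USet θ κ x, -θ (κ y) (κ x)) ≤ 1

/-- (LCB1) Lower frontier census bound. -/
def ColoredLCB1 (θ : Γ → Γ → ℤ) (κ : P → Γ) : Prop :=
  ∀ x : P, (∀ y : P, κ y = κ x → ¬y < x) →
    (LSet θ κ x).Finite ∧ (∑ᶠ y ∈ LSet θ κ x, -θ (κ y) (κ x)) ≤ 1

/-- A Γ-colored d-complete poset: locally finite, surjectively colored, and
satisfying EC, NA, AC, ICE2, and UCB1. -/
def GColoredDComplete (θ : Γ → Γ → ℤ) (κ : P → Γ) : Prop :=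
  LocallyFinitePoset P ∧ Function.Surjective κ ∧ ColoredEC κ ∧ ColoredNA θ κ ∧
    ColoredAC θ κ ∧ ColoredICE2 θ κ ∧ ColoredUCB1 θ κ

/-- A Γ-colored minuscule poset: Γ-colored d-complete and LCB1. -/
def GColoredMinuscule (θ : Γ → Γ → ℤ) (κ : P → Γ) : Prop :=
  GColoredDComplete θ κ ∧ ColoredLCB1 θ κ

/-- The top tree: the set of elements maximal in their color class. -/
def TopTree (κ : P → Γ) : Set P := {x : P | ∀ y : P, κ y = κ x → ¬x < y}

/-- `x` is covered by `y` within the subposet `S`. -/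
def CoversIn (S : Set P) (x y : P) : Prop :=
  x ∈ S ∧ y ∈ S ∧ x < y ∧ ∀ z ∈ S, x < z → ¬z < y

/-- Slant irreducibility of a Γ-colored d-complete poset. -/
def SlantIrreducible (κ : P → Γ) : Prop :=
  ConnectedPoset P ∧ ∀ x y : P, CoversIn (TopTree κ) x y → ∃ z : P, z ≠ y ∧ κ z = κ y

/-- A saturated chain in a subposet `S`: a chain that is convex in `S`. -/
def SaturatedChainIn (S C : Set P) : Prop :=
  C ⊆ S ∧ IsChain (· ≤ ·) C ∧ ∀ x ∈ C, ∀ y ∈ C, ∀ z ∈ S, x < z → z < y → z ∈ C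

/-- The lower frontier census at the element `y`. -/
noncomputable def LCensus (θ : Γ → Γ → ℤ) (κ : P → Γ) (y : P) : ℤ :=
  ∑ᶠ x ∈ LSet θ κ y, -θ (κ x) (κ y)

/-- A full heap: locally finite, surjectively colored, EC, NA, AC, ICE2, and every
color class order-isomorphic to ℤ. -/
def FullHeap (θ : Γ → Γ → ℤ) (κ : P → Γ) : Prop :=
  LocallyFinitePoset P ∧ Function.Surjective κ ∧ ColoredEC κ ∧ ColoredNA θ κ ∧
    ColoredAC θ κ ∧ ColoredICE2 θ κ ∧ ∀ a : Γ, Nonempty ({x : P // κ x = a} ≃o ℤ)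

end

/-- `ι` realizes the colored poset `A` as an order filter of the colored poset `B`. -/
def FilterEmbedding {G : Type*} {A B : Type*} [PartialOrder A] [PartialOrder B]
    (κ : A → G) (κ' : B → G) (ι : A → B) : Prop :=
  (∀ p q : A, ι p ≤ ι q ↔ p ≤ q) ∧ (∀ p : A, κ' (ι p) = κ p) ∧ IsUpperSet (Set.range ι)

/-- `B` is an extension of `A` by the color `a`, with extending element `x`. -/
def IsExtensionBy {G : Type*} {A B : Type*} [PartialOrder A] [PartialOrder B]
    (θ : G → G → ℤ) (κ : A → G) (κ' : B → G) (a : G) (ι : A → B) (x : B) : Prop :=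
  Finite B ∧ GColoredDComplete θ κ' ∧ ConnectedPoset B ∧
    FilterEmbedding κ κ' ι ∧ (Set.range ι)ᶜ = {x} ∧ κ' x = a

section MyAuxSlant

variable [PartialOrder P] [Fintype P]

private lemma myAdj_ne {θ : Γ → Γ → ℤ} (hθ : DynkinDatum θ) {a b : Γ}
    (h : AdjColor θ a b) : a ≠ b := by
  rintro rfl
  have h2 := hθ.1 a
  have h' : θ a a < 0 := h
  omega

private lemma myAdj_symm {θ : Γ → Γ → ℤ} (hθ : DynkinDatum θ) {a b : Γ}
    (h : AdjColor θ a b) : AdjColor θ b a := by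
  have hne := myAdj_ne hθ h
  have h' : θ a b < 0 := h
  rcases (hθ.2.1 b a hne.symm).lt_or_eq with h1 | h1
  · exact h1
  · exact absurd ((hθ.2.2 a b hne).mpr h1) (by omega)

private lemma myFinsum_single_le {S : Set P} (hS : S.Finite) (f : P → ℤ)
    (hpos : ∀ z ∈ S, 0 ≤ f z) {p : P} (hp : p ∈ S) :
    f p ≤ ∑ᶠ z ∈ S, f z := by
  rw [← hS.coe_toFinset, finsum_mem_coe_finset]
  exact Finset.single_le_sum (fun z hz => hpos z (hS.mem_toFinset.mp hz))
    (hS.mem_toFinset.mpr hp)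

private lemma myFinsum_pair_le {S : Set P} (hS : S.Finite) (f : P → ℤ)
    (hpos : ∀ z ∈ S, 0 ≤ f z) {p q : P} (hp : p ∈ S) (hq : q ∈ S) (hpq : p ≠ q) :
    f p + f q ≤ ∑ᶠ z ∈ S, f z := by
  classical
  rw [← hS.coe_toFinset, finsum_mem_coe_finset]
  have hsub : ({p, q} : Finset P) ⊆ hS.toFinset := by
    intro z hz
    simp only [Finset.mem_insert, Finset.mem_singleton] at hz
    rcases hz with rfl | rfl
    · exact hS.mem_toFinset.mpr hp
    · exact hS.mem_toFinset.mpr hq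
  calc f p + f q = ∑ z ∈ ({p, q} : Finset P), f z := (Finset.sum_pair hpq).symm
    _ ≤ ∑ z ∈ hS.toFinset, f z := Finset.sum_le_sum_of_subset_of_nonneg hsub
        (fun z hz _ => hpos z (hS.mem_toFinset.mp hz))

private lemma myExists_covby_le {v z : P} (h : v < z) : ∃ t : P, v ⋖ t ∧ t ≤ z := by
  obtain ⟨m, hm, hmin⟩ := Set.Finite.exists_minimalFor id {u : P | v < u ∧ u ≤ z}
    (Set.toFinite _) ⟨z, h, le_rfl⟩
  refine ⟨m, ⟨hm.1, fun c hc hcm => ?_⟩, hm.2⟩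
  have h1 : m = c := le_antisymm (hmin ⟨hc, hcm.le.trans hm.2⟩ hcm.le) hcm.le
  exact absurd h1.symm (ne_of_lt hcm)

private lemma myExists_le_covby {z v : P} (h : z < v) : ∃ t : P, z ≤ t ∧ t ⋖ v := by
  obtain ⟨m, hm, hmax⟩ := Set.Finite.exists_maximalFor id {u : P | z ≤ u ∧ u < v}
    (Set.toFinite _) ⟨z, le_rfl, h⟩
  refine ⟨m, hm.1, ⟨hm.2, fun c hc hcv => ?_⟩⟩
  have h1 : m = c := le_antisymm hc.le (hmax ⟨hm.1.trans hc.le, hcv⟩ hc.le)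
  exact absurd h1 (ne_of_lt hc)

private lemma myUcb_le_one {θ : Γ → Γ → ℤ} {κ : P → Γ} (hθ : DynkinDatum θ)
    (hU : ColoredUCB1 θ κ) {v p : P} (hmax : ∀ z, κ z = κ v → ¬v < z)
    (hp : p ∈ USet θ κ v) : -θ (κ p) (κ v) ≤ 1 := by
  obtain ⟨hfin, hsum⟩ := hU v hmax
  have h1 : -θ (κ p) (κ v) ≤ ∑ᶠ z ∈ USet θ κ v, -θ (κ z) (κ v) :=
    myFinsum_single_le hfin (fun z => -θ (κ z) (κ v)) (fun z hz => by
      have hno := hθ.2.1 _ _ (myAdj_ne hθ hz.2)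
      show (0:ℤ) ≤ -θ (κ z) (κ v)
      omega) hp
  omega

private lemma myLcb_le_one {θ : Γ → Γ → ℤ} {κ : P → Γ} (hθ : DynkinDatum θ)
    (hL : ColoredLCB1 θ κ) {v p : P} (hmin : ∀ z, κ z = κ v → ¬z < v)
    (hp : p ∈ LSet θ κ v) : -θ (κ p) (κ v) ≤ 1 := by
  obtain ⟨hfin, hsum⟩ := hL v hmin
  have h1 : -θ (κ p) (κ v) ≤ ∑ᶠ z ∈ LSet θ κ v, -θ (κ z) (κ v) :=
    myFinsum_single_le hfin (fun z => -θ (κ z) (κ v)) (fun z hz => by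
      have hno := hθ.2.1 _ _ (myAdj_ne hθ hz.2)
      show (0:ℤ) ≤ -θ (κ z) (κ v)
      omega) hp
  omega

private lemma myUcb_unique {θ : Γ → Γ → ℤ} {κ : P → Γ} (hθ : DynkinDatum θ)
    (hU : ColoredUCB1 θ κ) {v p q : P} (hmax : ∀ z, κ z = κ v → ¬v < z)
    (hp : p ∈ USet θ κ v) (hq : q ∈ USet θ κ v) : p = q := by
  by_contra hpq
  obtain ⟨hfin, hsum⟩ := hU v hmax
  have hpair : -θ (κ p) (κ v) + -θ (κ q) (κ v) ≤ ∑ᶠ z ∈ USet θ κ v, -θ (κ z) (κ v) :=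
    myFinsum_pair_le hfin (fun z => -θ (κ z) (κ v)) (fun z hz => by
      have hno := hθ.2.1 _ _ (myAdj_ne hθ hz.2)
      show (0:ℤ) ≤ -θ (κ z) (κ v)
      omega) hp hq hpq
  have h1 : θ (κ p) (κ v) < 0 := hp.2
  have h2 : θ (κ q) (κ v) < 0 := hq.2
  omega

private lemma myLcb_unique {θ : Γ → Γ → ℤ} {κ : P → Γ} (hθ : DynkinDatum θ)
    (hL : ColoredLCB1 θ κ) {v p q : P} (hmin : ∀ z, κ z = κ v → ¬z < v)
    (hp : p ∈ LSet θ κ v) (hq : q ∈ LSet θ κ v) : p = q := by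
  by_contra hpq
  obtain ⟨hfin, hsum⟩ := hL v hmin
  have hpair : -θ (κ p) (κ v) + -θ (κ q) (κ v) ≤ ∑ᶠ z ∈ LSet θ κ v, -θ (κ z) (κ v) :=
    myFinsum_pair_le hfin (fun z => -θ (κ z) (κ v)) (fun z hz => by
      have hno := hθ.2.1 _ _ (myAdj_ne hθ hz.2)
      show (0:ℤ) ≤ -θ (κ z) (κ v)
      omega) hp hq hpq
  have h1 : θ (κ p) (κ v) < 0 := hp.2
  have h2 : θ (κ q) (κ v) < 0 := hq.2
  omega

/-- The key invariant: `w < v` adjacent, both unique of their colors, everything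
below `v` is below `w`, everything above `w` is above `v`. -/
private def MyInv (θ : Γ → Γ → ℤ) (κ : P → Γ) (w v : P) : Prop :=
  w < v ∧ AdjColor θ (κ w) (κ v) ∧ (∀ z, κ z = κ w → z = w) ∧ (∀ z, κ z = κ v → z = v) ∧
    (∀ z, z < v → z ≤ w) ∧ (∀ z, w < z → v ≤ z)

private lemma myUpstep {θ : Γ → Γ → ℤ} {κ : P → Γ} (hθ : DynkinDatum θ)
    (hmin : GColoredMinuscule θ κ) {w v z0 : P} (hinv : MyInv θ κ w v) (hz : v < z0) :
    ∃ v', v < v' ∧ MyInv θ κ v v' := by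
  obtain ⟨hwv, hadj, Qw, Qv, hlow, hhigh⟩ := hinv
  obtain ⟨⟨_, _, hEC, hNA, hAC, _, hUCB⟩, hLCB⟩ := hmin
  have hmaxv : ∀ z, κ z = κ v → ¬v < z := fun z hzc hlt => (ne_of_gt hlt) (Qv z hzc)
  have hminv : ∀ z, κ z = κ v → ¬z < v := fun z hzc hlt => (ne_of_lt hlt) (Qv z hzc)
  obtain ⟨v', hcov, _⟩ := myExists_covby_le hz
  have hadj1 : AdjColor θ (κ v) (κ v') := hNA v v' hcov
  have hadj1' := myAdj_symm hθ hadj1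
  have hv'U : v' ∈ USet θ κ v := ⟨hcov.1, hadj1'⟩
  have hLv : ∀ q, q < v → AdjColor θ (κ q) (κ v) → q = w := fun q hq ha =>
    myLcb_unique hθ hLCB hminv ⟨hq, ha⟩ ⟨hwv, hadj⟩
  have Qv' : ∀ z, κ z = κ v' → z = v' := by
    intro z hzc
    have hadjz : AdjColor θ (κ z) (κ v) := by rw [hzc]; exact hadj1'
    rcases hAC z v hadjz with h | h
    · rcases h.lt_or_eq with h' | h'
      · exfalso
        have hzw := hLv z h' hadjz
        have hv'w : v' = w := Qw v' (by rw [← hzc, hzw])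
        rw [hv'w] at hcov
        exact absurd (hwv.trans hcov.1) (lt_irrefl w)
      · exact absurd (h' ▸ hzc : κ v = κ v') (myAdj_ne hθ hadj1)
    · rcases h.lt_or_eq with h' | h'
      · exact myUcb_unique hθ hUCB hmaxv ⟨h', hadjz⟩ hv'U
      · exact absurd (h' ▸ hzc : κ v = κ v') (myAdj_ne hθ hadj1)
  have hminv' : ∀ z, κ z = κ v' → ¬z < v' := fun z hzc hlt => (ne_of_lt hlt) (Qv' z hzc)
  have hlow' : ∀ z, z < v' → z ≤ v := by
    intro z hzlt
    obtain ⟨t, htz, htcov⟩ := myExists_le_covby hzlt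
    have ht : t = v := myLcb_unique hθ hLCB hminv' ⟨htcov.1, hNA t v' htcov⟩
      ⟨hcov.1, hadj1⟩
    exact ht ▸ htz
  have hhigh' : ∀ z, v < z → v' ≤ z := by
    intro z hzlt
    obtain ⟨t, htcov, htz⟩ := myExists_covby_le hzlt
    have ht : t = v' := myUcb_unique hθ hUCB hmaxv
      ⟨htcov.1, myAdj_symm hθ (hNA v t htcov)⟩ hv'U
    exact ht ▸ htz
  exact ⟨v', hcov.1, hcov.1, hadj1, Qv, Qv', hlow', hhigh'⟩

private lemma myDownstep {θ : Γ → Γ → ℤ} {κ : P → Γ} (hθ : DynkinDatum θ)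
    (hmin : GColoredMinuscule θ κ) {w v z0 : P} (hinv : MyInv θ κ w v) (hz : z0 < w) :
    ∃ w', w' < w ∧ MyInv θ κ w' w := by
  obtain ⟨hwv, hadj, Qw, Qv, hlow, hhigh⟩ := hinv
  obtain ⟨⟨_, _, hEC, hNA, hAC, _, hUCB⟩, hLCB⟩ := hmin
  have hmaxw : ∀ z, κ z = κ w → ¬w < z := fun z hzc hlt => (ne_of_gt hlt) (Qw z hzc)
  have hminw : ∀ z, κ z = κ w → ¬z < w := fun z hzc hlt => (ne_of_lt hlt) (Qw z hzc)
  obtain ⟨w', _, hcov⟩ := myExists_le_covby hz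
  have hadj1 : AdjColor θ (κ w') (κ w) := hNA w' w hcov
  have hadj1' := myAdj_symm hθ hadj1
  have hw'L : w' ∈ LSet θ κ w := ⟨hcov.1, hadj1⟩
  have hUw : ∀ q, w < q → AdjColor θ (κ q) (κ w) → q = v := fun q hq ha =>
    myUcb_unique hθ hUCB hmaxw ⟨hq, ha⟩ ⟨hwv, myAdj_symm hθ hadj⟩
  have Qw' : ∀ z, κ z = κ w' → z = w' := by
    intro z hzc
    have hadjz : AdjColor θ (κ z) (κ w) := by rw [hzc]; exact hadj1
    rcases hAC z w hadjz with h | h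
    · rcases h.lt_or_eq with h' | h'
      · exact myLcb_unique hθ hLCB hminw ⟨h', hadjz⟩ hw'L
      · exact absurd (h' ▸ hzc : κ w = κ w') (myAdj_ne hθ hadj1')
    · rcases h.lt_or_eq with h' | h'
      · exfalso
        have hzv := hUw z h' hadjz
        have hw'v : w' = v := Qv w' (by rw [← hzc, hzv])
        rw [hw'v] at hcov
        exact absurd (hcov.1.trans hwv) (lt_irrefl v)
      · exact absurd (h' ▸ hzc : κ w = κ w') (myAdj_ne hθ hadj1')
  have hmaxw' : ∀ z, κ z = κ w' → ¬w' < z := fun z hzc hlt => (ne_of_gt hlt) (Qw' z hzc)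
  have hlow' : ∀ z, z < w → z ≤ w' := by
    intro z hzlt
    obtain ⟨t, htz, htcov⟩ := myExists_le_covby hzlt
    have ht : t = w' := myLcb_unique hθ hLCB hminw ⟨htcov.1, hNA t w htcov⟩ hw'L
    exact ht ▸ htz
  have hhigh' : ∀ z, w' < z → w ≤ z := by
    intro z hzlt
    obtain ⟨t, htcov, htz⟩ := myExists_covby_le hzlt
    have ht : t = w := myUcb_unique hθ hUCB hmaxw'
      ⟨htcov.1, myAdj_symm hθ (hNA w' t htcov)⟩ ⟨hcov.1, hadj1'⟩
    exact ht ▸ htz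
  exact ⟨w', hcov.1, hcov.1, hadj1, Qw', Qw, hlow', hhigh'⟩

private lemma myDownpack {θ : Γ → Γ → ℤ} {κ : P → Γ} (hθ : DynkinDatum θ)
    (hmin : GColoredMinuscule θ κ) :
    ∀ w : P, ∀ v, MyInv θ κ w v →
      ((∀ z, z ≤ w → ∀ z', κ z' = κ z → z' = z) ∧
       (∀ z1, z1 ≤ w → ∀ z2, z2 ≤ w → z1 ≤ z2 ∨ z2 ≤ z1) ∧
       (∀ s, s ≤ w → ∀ t, s ≤ t → t ≤ w ∨ w ≤ t)) := by
  intro w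
  refine wellFounded_lt.induction
    (C := fun w => ∀ v, MyInv θ κ w v →
      ((∀ z, z ≤ w → ∀ z', κ z' = κ z → z' = z) ∧
       (∀ z1, z1 ≤ w → ∀ z2, z2 ≤ w → z1 ≤ z2 ∨ z2 ≤ z1) ∧
       (∀ s, s ≤ w → ∀ t, s ≤ t → t ≤ w ∨ w ≤ t))) w ?_
  clear w
  intro w IH v hinv
  by_cases hb : ∃ z, z < w
  · obtain ⟨z0, hz0⟩ := hb
    obtain ⟨w', hw'w, hinv'⟩ := myDownstep hθ hmin hinv hz0
    obtain ⟨IHQ, IHC, IHU⟩ := IH w' hw'w w hinv'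
    refine ⟨?_, ?_, ?_⟩
    · intro z hz z' hzc
      rcases hz.lt_or_eq with h' | h'
      · exact IHQ z (hinv'.2.2.2.2.1 z h') z' hzc
      · exact h' ▸ (hinv.2.2.1 z' (h' ▸ hzc))
    · intro z1 hz1 z2 hz2
      rcases hz1.lt_or_eq with h1 | h1
      · rcases hz2.lt_or_eq with h2 | h2
        · exact IHC z1 (hinv'.2.2.2.2.1 z1 h1) z2 (hinv'.2.2.2.2.1 z2 h2)
        · exact Or.inl (h2 ▸ hz1)
      · exact Or.inr (h1 ▸ hz2)
    · intro s hs t hst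
      rcases hs.lt_or_eq with h1 | h1
      · rcases IHU s (hinv'.2.2.2.2.1 s h1) t hst with h | h
        · exact Or.inl (h.trans hw'w.le)
        · rcases h.lt_or_eq with h' | h'
          · exact Or.inr (hinv'.2.2.2.2.2 t h')
          · exact Or.inl (h' ▸ hw'w.le)
      · exact Or.inr (h1 ▸ hst)
  · push_neg at hb
    have hall : ∀ z, z ≤ w → z = w := fun z hz => hz.lt_or_eq.resolve_left (hb z)
    refine ⟨?_, ?_, ?_⟩
    · intro z hz z' hzc
      have := hall z hz
      exact this ▸ (hinv.2.2.1 z' (this ▸ hzc))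
    · intro z1 hz1 z2 hz2
      rw [hall z1 hz1, hall z2 hz2]
      exact Or.inl le_rfl
    · intro s hs t hst
      exact Or.inr ((hall s hs) ▸ hst)

private lemma myUppack {θ : Γ → Γ → ℤ} {κ : P → Γ} (hθ : DynkinDatum θ)
    (hmin : GColoredMinuscule θ κ) :
    ∀ v : P, ∀ w, MyInv θ κ w v →
      ((∀ z, v ≤ z → ∀ z', κ z' = κ z → z' = z) ∧
       (∀ z1, v ≤ z1 → ∀ z2, v ≤ z2 → z1 ≤ z2 ∨ z2 ≤ z1) ∧
       (∀ s, v ≤ s → ∀ t, t ≤ s → t ≤ v ∨ v ≤ t)) := by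
  intro v
  refine wellFounded_gt.induction
    (C := fun v => ∀ w, MyInv θ κ w v →
      ((∀ z, v ≤ z → ∀ z', κ z' = κ z → z' = z) ∧
       (∀ z1, v ≤ z1 → ∀ z2, v ≤ z2 → z1 ≤ z2 ∨ z2 ≤ z1) ∧
       (∀ s, v ≤ s → ∀ t, t ≤ s → t ≤ v ∨ v ≤ t))) v ?_
  clear v
  intro v IH w hinv
  by_cases hb : ∃ z, v < z
  · obtain ⟨z0, hz0⟩ := hb
    obtain ⟨v', hvv', hinv'⟩ := myUpstep hθ hmin hinv hz0
    obtain ⟨IHQ, IHC, IHU⟩ := IH v' hvv' v hinv'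
    refine ⟨?_, ?_, ?_⟩
    · intro z hz z' hzc
      rcases hz.lt_or_eq with h' | h'
      · exact IHQ z (hinv'.2.2.2.2.2 z h') z' hzc
      · exact h'.symm ▸ (hinv.2.2.2.1 z' (h'.symm ▸ hzc))
    · intro z1 hz1 z2 hz2
      rcases hz1.lt_or_eq with h1 | h1
      · rcases hz2.lt_or_eq with h2 | h2
        · exact IHC z1 (hinv'.2.2.2.2.2 z1 h1) z2 (hinv'.2.2.2.2.2 z2 h2)
        · exact Or.inr (h2 ▸ hz1)
      · exact Or.inl (h1 ▸ hz2)
    · intro s hs t hts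
      rcases hs.lt_or_eq with h1 | h1
      · rcases IHU s (hinv'.2.2.2.2.2 s h1) t hts with h | h
        · rcases h.lt_or_eq with h' | h'
          · exact Or.inl (hinv'.2.2.2.2.1 t h')
          · exact Or.inr (h' ▸ hvv'.le)
        · exact Or.inr (hvv'.le.trans h)
      · exact Or.inl (h1 ▸ hts)
  · push_neg at hb
    have hall : ∀ z, v ≤ z → z = v := fun z hz => (hz.lt_or_eq.resolve_left (hb z)).symm
    refine ⟨?_, ?_, ?_⟩
    · intro z hz z' hzc
      have := hall z hz
      exact this ▸ (hinv.2.2.2.1 z' (this ▸ hzc))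
    · intro z1 hz1 z2 hz2
      rw [hall z1 hz1, hall z2 hz2]
      exact Or.inl le_rfl
    · intro s hs t hts
      exact Or.inl ((hall s hs) ▸ hts)

end MyAuxSlant

/-- A connected finite Γ-colored minuscule poset is either a chain with
Γ simply laced, or slant irreducible as a Γ-colored d-complete poset. -/
theorem chain_or_slantIrreducible [Fintype Γ] [PartialOrder P] [Fintype P] [Nonempty P]
    (θ : Γ → Γ → ℤ) (κ : P → Γ) (hθ : DynkinDatum θ)
    (hmin : GColoredMinuscule θ κ) (hconn : ConnectedPoset P) :
    (IsChain (· ≤ ·) (Set.univ : Set P) ∧ SimplyLaced θ) ∨ SlantIrreducible κ := by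
  by_cases hsl : ∀ x y : P, CoversIn (TopTree κ) x y → ∃ z : P, z ≠ y ∧ κ z = κ y
  · exact Or.inr ⟨hconn, hsl⟩
  left
  push_neg at hsl
  obtain ⟨x, y, hcover, hQy'⟩ := hsl
  have Qy : ∀ z, κ z = κ y → z = y := by
    intro z hz
    by_contra h
    exact hQy' z h hz
  obtain ⟨xT, yT, hxy, hbet⟩ := hcover
  have xT' : ∀ z, κ z = κ x → ¬x < z := xT
  obtain ⟨⟨hLF, hsurj, hEC, hNA, hAC, hICE, hUCB⟩, hLCB⟩ := hmin
  have hmaxy : ∀ z, κ z = κ y → ¬y < z := fun z hzc hlt => (ne_of_gt hlt) (Qy z hzc)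
  have hminy : ∀ z, κ z = κ y → ¬z < y := fun z hzc hlt => (ne_of_lt hlt) (Qy z hzc)
  -- x is covered by y in P
  obtain ⟨v, hvcov, hvy⟩ := myExists_covby_le hxy
  have hadjxv : AdjColor θ (κ x) (κ v) := hNA x v hvcov
  have hvU : v ∈ USet θ κ x := ⟨hvcov.1, myAdj_symm hθ hadjxv⟩
  have hvT : v ∈ TopTree κ := by
    intro z hzc hvz
    have hzU : z ∈ USet θ κ x :=
      ⟨hvcov.1.trans hvz, by rw [hzc]; exact myAdj_symm hθ hadjxv⟩
    exact (ne_of_gt hvz) (myUcb_unique hθ hUCB xT' hzU hvU)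
  have hvy' : v = y := hvy.lt_or_eq.resolve_left (hbet v hvT hvcov.1)
  have hcovxy : x ⋖ y := hvy' ▸ hvcov
  have hadjxy : AdjColor θ (κ x) (κ y) := by rw [← hvy']; exact hadjxv
  have hadjyx := myAdj_symm hθ hadjxy
  have hxLy : x ∈ LSet θ κ y := ⟨hcovxy.1, hadjxy⟩
  have Qx : ∀ z, κ z = κ x → z = x := by
    intro z hzc
    rcases hEC z x hzc with h | h
    · rcases h.lt_or_eq with h' | h'
      · exact myLcb_unique hθ hLCB hminy
          ⟨h'.trans hcovxy.1, by rw [hzc]; exact hadjxy⟩ hxLy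
      · exact h'
    · rcases h.lt_or_eq with h' | h'
      · exact absurd h' (xT' z hzc)
      · exact h'.symm
  have hlowy : ∀ z, z < y → z ≤ x := by
    intro z hzlt
    obtain ⟨t, htz, htcov⟩ := myExists_le_covby hzlt
    have ht : t = x := myLcb_unique hθ hLCB hminy ⟨htcov.1, hNA t y htcov⟩ hxLy
    exact ht ▸ htz
  have hhighx : ∀ z, x < z → y ≤ z := by
    intro z hzlt
    obtain ⟨t, htcov, htz⟩ := myExists_covby_le hzlt
    have ht : t = y := myUcb_unique hθ hUCB xT'
      ⟨htcov.1, myAdj_symm hθ (hNA x t htcov)⟩ ⟨hcovxy.1, hadjyx⟩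
    exact ht ▸ htz
  have hinv0 : MyInv θ κ x y := ⟨hcovxy.1, hadjxy, Qx, Qy, hlowy, hhighx⟩
  have hmin' : GColoredMinuscule θ κ :=
    ⟨⟨hLF, hsurj, hEC, hNA, hAC, hICE, hUCB⟩, hLCB⟩
  obtain ⟨DQ, DC, DU⟩ := myDownpack hθ hmin' x y hinv0
  obtain ⟨UQ, UC, UD⟩ := myUppack hθ hmin' y x hinv0
  -- every element is comparable to x
  have compx : ∀ z : P, z ≤ x ∨ x ≤ z := by
    by_contra hc
    push_neg at hc
    obtain ⟨z0, hz1, hz2⟩ := hc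
    obtain ⟨s, hs, t, ht, hcmp⟩ := hconn {z | z ≤ x ∨ x ≤ z} ⟨x, Or.inl le_rfl⟩
      ⟨z0, fun h => by rcases h with h | h; exacts [hz1 h, hz2 h]⟩
    have ht' : ¬(t ≤ x ∨ x ≤ t) := ht
    rcases hs with hs | hs
    · rcases hcmp with h | h
      · exact ht' (DU s hs t h)
      · exact ht' (Or.inl (h.trans hs))
    · rcases hcmp with h | h
      · exact ht' (Or.inr (hs.trans h))
      · rcases hs.lt_or_eq with h1 | h1
        · rcases UD s (hhighx s h1) t h with h2 | h2
          · rcases h2.lt_or_eq with h3 | h3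
            · exact ht' (Or.inl (hlowy t h3))
            · exact ht' (Or.inr (h3 ▸ hcovxy.1.le))
          · exact ht' (Or.inr (hcovxy.1.le.trans h2))
        · exact ht' (Or.inl (h1 ▸ h))
  have chainAll : IsChain (· ≤ ·) (Set.univ : Set P) := by
    intro z1 _ z2 _ _
    rcases compx z1 with h1 | h1
    · rcases compx z2 with h2 | h2
      · exact DC z1 h1 z2 h2
      · exact Or.inl (h1.trans h2)
    · rcases compx z2 with h2 | h2
      · exact Or.inr (h2.trans h1)
      · rcases h1.lt_or_eq with h1' | h1'
        · rcases h2.lt_or_eq with h2' | h2'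
          · exact UC z1 (hhighx z1 h1') z2 (hhighx z2 h2')
          · exact Or.inr (h2' ▸ h1)
        · exact Or.inl (h1' ▸ h2)
  have Qall : ∀ z : P, ∀ z', κ z' = κ z → z' = z := by
    intro z
    rcases compx z with h | h
    · exact DQ z h
    · rcases h.lt_or_eq with h' | h'
      · exact UQ z (hhighx z h')
      · exact h' ▸ Qx
  refine ⟨chainAll, ?_⟩
  intro a b hab
  rcases (hθ.2.1 a b hab).lt_or_eq with hlt | h0
  · right
    obtain ⟨pa, hpa⟩ := hsurj a
    obtain ⟨pb, hpb⟩ := hsurj b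
    have hadj : AdjColor θ (κ pa) (κ pb) := by rw [hpa, hpb]; exact hlt
    have hne : pa ≠ pb := fun h => hab (by rw [← hpa, ← hpb, h])
    have hkey : -θ (κ pa) (κ pb) ≤ 1 := by
      rcases hAC pa pb hadj with hle | hle
      · have h' : pa < pb := hle.lt_of_ne hne
        have hminb : ∀ z, κ z = κ pb → ¬z < pb :=
          fun z hzc hlt' => (ne_of_lt hlt') (Qall pb z hzc)
        exact myLcb_le_one hθ hLCB hminb ⟨h', hadj⟩
      · have h' : pb < pa := hle.lt_of_ne hne.symm
        have hmaxb : ∀ z, κ z = κ pb → ¬pb < z :=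
          fun z hzc hlt' => (ne_of_gt hlt') (Qall pb z hzc)
        exact myUcb_le_one hθ hUCB hmaxb ⟨h', hadj⟩
    rw [hpa, hpb] at hkey
    omega
  · exact Or.inl h0
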